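/- Let a ≥ 0 and f ∈ H¹ₗₒ꜀(ℝ) with f(x) = 0 for x ≤ a and ∫_a^∞ (f² + f'²) dγ₁ < ∞, where dγ₁ = (4π)^{-1/2} e^{-x²/4} dx is the Gaussian measure. Then there is a constant C > 0 (independent of a and f) such that ∫_a^∞ f² dγ₁ ≤ C ∫_a^∞ f'² dγ₁. -/

import Mathlib

open MeasureTheory Real Set

/-- The Gaussian measure on `ℝ` with density `(4π)^(-1/2) e^(-x²/4)`. -/
noncomputable def gamma1 : Measure ℝ :=
  volume.withDensity fun x => ENNReal.ofReal ((4 * π) ^ (-(1 : ℝ) / 2) * Real.exp (-x ^ 2 / 4))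

namespace Stmt0Aux

/-- The density of `gamma1`. -/
noncomputable def rho (x : ℝ) : ℝ := (4 * π) ^ (-(1 : ℝ) / 2) * Real.exp (-x ^ 2 / 4)

lemma rho_pos (x : ℝ) : 0 < rho x := by
  unfold rho
  have := Real.pi_pos
  positivity

lemma rho_cont : Continuous rho := by
  unfold rho
  fun_prop

lemma rho_integrable : Integrable rho := by
  unfold rho
  apply Integrable.const_mul
  have h : ∀ x : ℝ, -x ^ 2 / 4 = -((4:ℝ)⁻¹ * x ^ 2) := fun x => by ring
  simp_rw [h]
  simpa [neg_mul] using integrable_exp_neg_mul_sq (by norm_num : (0:ℝ) < 4⁻¹)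

/-- The Gaussian tail. -/
noncomputable def G (x : ℝ) : ℝ := ∫ t in Ioi x, rho t

lemma G_nonneg (x : ℝ) : 0 ≤ G x :=
  setIntegral_nonneg measurableSet_Ioi fun t _ => (rho_pos t).le

lemma G_eq (x : ℝ) : G x = G 0 - ∫ t in (0:ℝ)..x, rho t := by
  rcases le_or_gt 0 x with h | h
  · rw [intervalIntegral.integral_of_le h]
    have hsplit : G 0 = (∫ t in Ioc 0 x, rho t) + G x := by
      unfold G
      rw [← setIntegral_union (Ioc_disjoint_Ioi le_rfl) measurableSet_Ioi
        (rho_integrable.integrableOn) (rho_integrable.integrableOn), Ioc_union_Ioi_eq_Ioi h]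
    linarith
  · rw [intervalIntegral.integral_of_ge h.le]
    have hsplit : G x = (∫ t in Ioc x 0, rho t) + G 0 := by
      unfold G
      rw [← setIntegral_union (Ioc_disjoint_Ioi le_rfl) measurableSet_Ioi
        (rho_integrable.integrableOn) (rho_integrable.integrableOn), Ioc_union_Ioi_eq_Ioi h.le]
    linarith

lemma G_hasDerivAt (x : ℝ) : HasDerivAt G (-(rho x)) x := by
  have h1 : HasDerivAt (fun y => ∫ t in (0:ℝ)..y, rho t) (rho x) x :=
    intervalIntegral.integral_hasDerivAt_right (rho_cont.intervalIntegrable _ _)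
      (rho_cont.stronglyMeasurableAtFilter _ _) rho_cont.continuousAt
  have h2 : HasDerivAt (fun y => G 0 - ∫ t in (0:ℝ)..y, rho t) (-(rho x)) x := by
    simpa using (h1.const_sub (G 0))
  have : (fun y => G 0 - ∫ t in (0:ℝ)..y, rho t) = G := by
    funext y; rw [G_eq y]
  rwa [this] at h2

lemma G_cont : Continuous G := by
  have h : Differentiable ℝ G := fun x => (G_hasDerivAt x).differentiableAt
  exact h.continuous

lemma G_le {x : ℝ} (hx : 0 ≤ x) : G x ≤ Real.sqrt (4 * π) * rho x := by
  have hint2 : Integrable (fun t : ℝ => Real.exp (-(t - x) ^ 2 / 4)) := by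
    have h : Integrable (fun t : ℝ => Real.exp (-t ^ 2 / 4)) := by
      have h4 : ∀ t : ℝ, -t ^ 2 / 4 = -((4:ℝ)⁻¹ * t ^ 2) := fun t => by ring
      simp_rw [h4]
      simpa [neg_mul] using integrable_exp_neg_mul_sq (by norm_num : (0:ℝ) < 4⁻¹)
    exact h.comp_sub_right x
  have h1 : G x ≤ ∫ t in Ioi x, rho x * Real.exp (-(t - x) ^ 2 / 4) := by
    apply setIntegral_mono_on rho_integrable.integrableOn
      ((hint2.const_mul _).integrableOn) measurableSet_Ioi
    intro t ht
    have htx : x ≤ t := le_of_lt ht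
    unfold rho
    rw [mul_assoc, ← Real.exp_add]
    apply mul_le_mul_of_nonneg_left _ (by positivity)
    apply Real.exp_le_exp.2
    nlinarith [mul_nonneg hx (sub_nonneg.2 htx)]
  have h2 : ∫ t in Ioi x, rho x * Real.exp (-(t - x) ^ 2 / 4)
      ≤ rho x * Real.sqrt (4 * π) := by
    rw [MeasureTheory.integral_const_mul]
    apply mul_le_mul_of_nonneg_left _ (rho_pos x).le
    have h3 : ∫ t in Ioi x, Real.exp (-(t - x) ^ 2 / 4) ≤ ∫ t : ℝ, Real.exp (-(t - x) ^ 2 / 4) :=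
      setIntegral_le_integral hint2 (Filter.Eventually.of_forall fun t => (Real.exp_pos _).le)
    have h4 : ∫ t : ℝ, Real.exp (-(t - x) ^ 2 / 4) = Real.sqrt (4 * π) := by
      rw [integral_sub_right_eq_self (fun t : ℝ => Real.exp (-t ^ 2 / 4)) x]
      have h5 : ∀ t : ℝ, -t ^ 2 / 4 = -((4:ℝ)⁻¹ * t ^ 2) := fun t => by ring
      simp_rw [h5, neg_mul_eq_neg_mul]
      rw [integral_gaussian, show π / (4:ℝ)⁻¹ = 4 * π by field_simp]
    linarith [h3, h4.le]
  linarith [h1, h2, mul_comm (rho x) (Real.sqrt (4 * π))]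

end Stmt0Aux

set_option maxHeartbeats 1600000 in
/-- Gaussian Poincaré inequality on `(a, ∞)` for functions vanishing on `(-∞, a]`. -/
theorem stmt0 :
    ∃ C > 0, ∀ a : ℝ, 0 ≤ a → ∀ f : ℝ → ℝ,
      Differentiable ℝ f →
      (∀ x ≤ a, f x = 0) →
      IntegrableOn (fun x => (f x) ^ 2 + (deriv f x) ^ 2) (Ioi a) gamma1 →
      ∫ x in Ioi a, (f x) ^ 2 ∂gamma1 ≤ C * ∫ x in Ioi a, (deriv f x) ^ 2 ∂gamma1 := by
  refine ⟨16 * π, by have := Real.pi_pos; positivity, ?_⟩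
  intro a ha f hf hf0 hInt
  set f' := deriv f with hf'def
  have hfc : Continuous f := hf.continuous
  have hf'm : Measurable f' := measurable_deriv f
  set ρ := Stmt0Aux.rho with hρdef
  have hρc : Continuous ρ := Stmt0Aux.rho_cont
  have hρpos : ∀ x, 0 < ρ x := Stmt0Aux.rho_pos
  have hg1 : gamma1 = volume.withDensity (fun x => ((Real.toNNReal (ρ x) : NNReal) : ENNReal)) := by
    unfold gamma1
    rfl
  have hνm : Measurable (fun x => Real.toNNReal (ρ x)) := hρc.measurable.real_toNNReal
  have hconv : ∀ g : ℝ → ℝ, ∫ x in Ioi a, g x ∂gamma1 = ∫ x in Ioi a, g x * ρ x := by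
    intro g
    rw [hg1, setIntegral_withDensity_eq_setIntegral_smul hνm g measurableSet_Ioi]
    refine integral_congr_ae (Filter.Eventually.of_forall fun x => ?_)
    simp [NNReal.smul_def, Real.coe_toNNReal _ (hρpos x).le, mul_comm]
  have hIntw : IntegrableOn (fun x => (f x ^ 2 + f' x ^ 2) * ρ x) (Ioi a) volume := by
    have h := hInt
    rw [IntegrableOn, hg1, restrict_withDensity measurableSet_Ioi,
      integrable_withDensity_iff_integrable_smul hνm] at h
    refine h.congr (Filter.Eventually.of_forall fun x => ?_)
    simp only [NNReal.smul_def, Real.coe_toNNReal _ (hρpos x).le, smul_eq_mul]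
    ring
  have hmF : AEStronglyMeasurable (fun x => f x ^ 2 * ρ x) (volume.restrict (Ioi a)) :=
    ((hfc.pow 2).mul hρc).aestronglyMeasurable.restrict
  have hmE : AEStronglyMeasurable (fun x => f' x ^ 2 * ρ x) (volume.restrict (Ioi a)) :=
    (((hf'm.pow_const 2).mul hρc.measurable).aestronglyMeasurable).restrict
  have hF : IntegrableOn (fun x => f x ^ 2 * ρ x) (Ioi a) volume := by
    refine Integrable.mono hIntw hmF (Filter.Eventually.of_forall fun x => ?_)
    have h2 := (hρpos x).le
    rw [Real.norm_eq_abs, Real.norm_eq_abs, abs_of_nonneg (by positivity),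
      abs_of_nonneg (by positivity)]
    nlinarith [sq_nonneg (f' x), sq_nonneg (f x)]
  have hE : IntegrableOn (fun x => f' x ^ 2 * ρ x) (Ioi a) volume := by
    refine Integrable.mono hIntw hmE (Filter.Eventually.of_forall fun x => ?_)
    have h2 := (hρpos x).le
    rw [Real.norm_eq_abs, Real.norm_eq_abs, abs_of_nonneg (by positivity),
      abs_of_nonneg (by positivity)]
    nlinarith [sq_nonneg (f' x), sq_nonneg (f x)]
  set F := ∫ x in Ioi a, f x ^ 2 * ρ x with hFdef
  set E := ∫ x in Ioi a, f' x ^ 2 * ρ x with hEdef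
  have hEnn : 0 ≤ E := setIntegral_nonneg measurableSet_Ioi fun x _ => by
    have := (hρpos x).le; positivity
  set K := Real.sqrt (4 * π) with hKdef
  have hKnn : 0 ≤ K := Real.sqrt_nonneg _
  have hK2 : K ^ 2 = 4 * π := Real.sq_sqrt (by have := Real.pi_pos; positivity)
  set G := Stmt0Aux.G with hGdef
  have key : ∀ b, a ≤ b → ∫ x in Ioc a b, f x ^ 2 * ρ x ≤ F / 2 + (2 * (4 * π)) * E := by
    intro b hab
    have hH : ∀ x, HasDerivAt (fun y => f y ^ 2 * G y)
        (2 * f x * f' x * G x - f x ^ 2 * ρ x) x := by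
      intro x
      have h1 : HasDerivAt (fun y => f y ^ 2) (2 * f x * f' x) x := by
        have h : HasDerivAt (fun y => f y ^ 2) (((2:ℕ):ℝ) * f x ^ (2 - 1) * deriv f x) x :=
          ((hf x).hasDerivAt).pow 2
        convert h using 1
        push_cast
        ring
      have h2 : HasDerivAt (fun y => f y ^ 2 * G y) (2 * f x * f' x * G x + f x ^ 2 * -(ρ x)) x :=
        h1.mul (Stmt0Aux.G_hasDerivAt x)
      convert h2 using 1
      ring
    have hsub : Ioc a b ⊆ Ioi a := Ioc_subset_Ioi_self
    have hEIoc : IntegrableOn (fun x => f' x ^ 2 * ρ x) (Ioc a b) volume := hE.mono_set hsub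
    have hFIoc : IntegrableOn (fun x => f x ^ 2 * ρ x) (Ioc a b) volume := hF.mono_set hsub
    have hrhob : ∀ x ∈ Ioc a b, ρ b ≤ ρ x := by
      intro x hx
      rw [hρdef]
      unfold Stmt0Aux.rho
      apply mul_le_mul_of_nonneg_left _ (by have := Real.pi_pos; positivity)
      apply Real.exp_le_exp.2
      have h0x : 0 ≤ x := le_trans ha hx.1.le
      nlinarith [hx.2, h0x]
    have hf'2 : IntegrableOn (fun x => f' x ^ 2) (Ioc a b) volume := by
      refine Integrable.mono (hEIoc.const_mul (ρ b)⁻¹)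
        ((hf'm.pow_const 2).aestronglyMeasurable.restrict) ?_
      refine (ae_restrict_iff' measurableSet_Ioc).2 (Filter.Eventually.of_forall fun x hx => ?_)
      have h1 := hrhob x hx
      have h2 := hρpos b
      have h3 := (hρpos x).le
      rw [Real.norm_eq_abs, Real.norm_eq_abs, abs_of_nonneg (sq_nonneg _),
        abs_of_nonneg (by positivity), inv_mul_eq_div, le_div_iff₀ h2]
      nlinarith [sq_nonneg (f' x)]
    have hf'1 : IntegrableOn (fun x => |f' x|) (Ioc a b) volume := by
      refine Integrable.mono ((integrable_const (1:ℝ)).add hf'2)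
        (hf'm.abs.aestronglyMeasurable.restrict) (Filter.Eventually.of_forall fun x => ?_)
      rw [Real.norm_eq_abs, abs_abs, Real.norm_eq_abs, Pi.add_apply]
      have h1 : (0:ℝ) ≤ 1 + f' x ^ 2 := by positivity
      rw [abs_of_nonneg h1]
      nlinarith [sq_nonneg (|f' x| - 1), sq_abs (f' x)]
    have h2fG : IntegrableOn (fun x => 2 * f x * f' x * G x) (Ioc a b) volume := by
      have hcont2 : ContinuousOn (fun x => 2 * f x * G x) (Icc a b) :=
        ((continuous_const.mul hfc).mul Stmt0Aux.G_cont).continuousOn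
      obtain ⟨M, hM⟩ := (isCompact_Icc (a := a) (b := b)).exists_bound_of_continuousOn hcont2
      refine Integrable.mono (hf'1.const_mul M)
        ((((continuous_const.mul hfc).measurable.mul hf'm).mul
          Stmt0Aux.G_cont.measurable).aestronglyMeasurable.restrict) ?_
      refine (ae_restrict_iff' measurableSet_Ioc).2 (Filter.Eventually.of_forall fun x hx => ?_)
      have hxI : x ∈ Icc a b := Ioc_subset_Icc_self hx
      have hMx := hM x hxI
      rw [Real.norm_eq_abs] at hMx ⊢
      rw [Real.norm_eq_abs]
      have : |2 * f x * f' x * G x| = |2 * f x * G x| * |f' x| := by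
        rw [← abs_mul]; ring_nf
      rw [this]
      exact le_trans (mul_le_mul_of_nonneg_right hMx (abs_nonneg _)) (le_abs_self _)
    have hH'int : IntegrableOn (fun x => 2 * f x * f' x * G x - f x ^ 2 * ρ x)
        (Ioc a b) volume := h2fG.sub hFIoc
    have hIBP : ∫ x in Ioc a b, (2 * f x * f' x * G x - f x ^ 2 * ρ x) = f b ^ 2 * G b := by
      have h := intervalIntegral.integral_eq_sub_of_hasDerivAt (f := fun y => f y ^ 2 * G y)
        (f' := fun x => 2 * f x * f' x * G x - f x ^ 2 * ρ x) (fun x _ => hH x)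
        ((intervalIntegrable_iff_integrableOn_Ioc_of_le hab).2 hH'int)
      rw [intervalIntegral.integral_of_le hab] at h
      rw [h]
      show f b ^ 2 * G b - f a ^ 2 * G a = f b ^ 2 * G b
      rw [hf0 a le_rfl]
      ring
    have hsplit : ∫ x in Ioc a b, f x ^ 2 * ρ x
        = (∫ x in Ioc a b, 2 * f x * f' x * G x) - f b ^ 2 * G b := by
      rw [← hIBP, integral_sub h2fG hFIoc]
      ring
    have hstep : ∫ x in Ioc a b, 2 * f x * f' x * G x
        ≤ ∫ x in Ioc a b, (f x ^ 2 * ρ x / 2 + 2 * (4 * π) * (f' x ^ 2 * ρ x)) := by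
      refine setIntegral_mono_on h2fG
        ((hFIoc.div_const 2).add (hEIoc.const_mul _)) measurableSet_Ioc ?_
      intro x hx
      have h0x : (0:ℝ) ≤ x := le_trans ha hx.1.le
      have hGle : G x ≤ K * ρ x := Stmt0Aux.G_le h0x
      have hGnn : 0 ≤ G x := Stmt0Aux.G_nonneg x
      have hρx := (hρpos x).le
      have e1 : 2 * f x * f' x * G x ≤ 2 * |f x| * |f' x| * G x := by
        have h1 : f x * f' x ≤ |f x| * |f' x| := by
          rw [← abs_mul]
          exact le_abs_self _
        nlinarith [hGnn]
      have e2 : 2 * |f x| * |f' x| * G x ≤ 2 * |f x| * |f' x| * (K * ρ x) := by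
        apply mul_le_mul_of_nonneg_left hGle (by positivity)
      have e3 : 2 * |f x| * |f' x| * (K * ρ x)
          ≤ (f x ^ 2 / 2 + 2 * K ^ 2 * f' x ^ 2) * ρ x := by
        have hsq := sq_nonneg (|f x| - 2 * K * |f' x|)
        have h1 : 2 * K * (|f x| * |f' x|) ≤ f x ^ 2 / 2 + 2 * K ^ 2 * f' x ^ 2 := by
          nlinarith [sq_abs (f x), sq_abs (f' x)]
        nlinarith [mul_le_mul_of_nonneg_right h1 hρx]
      have e4 : (f x ^ 2 / 2 + 2 * K ^ 2 * f' x ^ 2) * ρ x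
          = f x ^ 2 * ρ x / 2 + 2 * (4 * π) * (f' x ^ 2 * ρ x) := by
        rw [hK2]; ring
      linarith
    have hmono : ∫ x in Ioc a b, (f x ^ 2 * ρ x / 2 + 2 * (4 * π) * (f' x ^ 2 * ρ x))
        ≤ F / 2 + 2 * (4 * π) * E := by
      rw [integral_add (hFIoc.div_const 2) (hEIoc.const_mul _), integral_div,
        MeasureTheory.integral_const_mul]
      have hm1 : ∫ x in Ioc a b, f x ^ 2 * ρ x ≤ F := by
        refine setIntegral_mono_set hF ?_ hsub.eventuallyLE
        exact Filter.Eventually.of_forall fun x => by have := (hρpos x).le; positivity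
      have hm2 : ∫ x in Ioc a b, f' x ^ 2 * ρ x ≤ E := by
        refine setIntegral_mono_set hE ?_ hsub.eventuallyLE
        exact Filter.Eventually.of_forall fun x => by have := (hρpos x).le; positivity
      have hπ : (0:ℝ) ≤ 2 * (4 * π) := by have := Real.pi_pos; positivity
      have h5 := mul_le_mul_of_nonneg_left hm2 hπ
      linarith [hm1]
    have hGbnn : 0 ≤ f b ^ 2 * G b := mul_nonneg (sq_nonneg _) (Stmt0Aux.G_nonneg b)
    linarith
  have hlim : Filter.Tendsto (fun b => ∫ x in a..b, f x ^ 2 * ρ x)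
      Filter.atTop (nhds F) :=
    intervalIntegral_tendsto_integral_Ioi a hF Filter.tendsto_id
  have hFle : F ≤ F / 2 + 2 * (4 * π) * E := by
    refine le_of_tendsto hlim ?_
    filter_upwards [Filter.eventually_ge_atTop a] with b hb
    rw [intervalIntegral.integral_of_le hb]
    exact key b hb
  rw [hconv (fun x => f x ^ 2), hconv (fun x => (deriv f x) ^ 2)]
  have hgoal : F ≤ 16 * π * E := by nlinarith [hFle]
  exact hgoal
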